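/- arXiv:2405.18846 — 3 statements merged into one kernel-verified Lean document; each statement's English description precedes it below -/
import Mathlib

section
/- Let p > 1 and let μ_p = (√((p+1)/2) · L_p)^{2/(p-1)} where L_p = ∫₁^∞ dt/√(t^{p+1}-1). Then log μ_p → 0, hence μ_p → 1, as p → ∞. -/
open Real Set MeasureTheory Filter Topology

noncomputable def myL (p : ℝ) : ℝ := ∫ t in Set.Ioi (1 : ℝ), 1 / Real.sqrt (t ^ (p + 1) - 1)

lemma integrand_nonneg (p : ℝ) (t : ℝ) : 0 ≤ 1 / Real.sqrt (t ^ (p + 1) - 1) := by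
  positivity

lemma key_lb {p t : ℝ} (hp : 5 ≤ p) (ht : 1 < t) : t - 1 ≤ t ^ (p + 1) - 1 := by
  have h1 : t ^ (1 : ℝ) ≤ t ^ (p + 1) :=
    Real.rpow_le_rpow_of_exponent_le ht.le (by linarith)
  rw [Real.rpow_one] at h1; linarith

lemma key_pos {p t : ℝ} (hp : 5 ≤ p) (ht : 1 < t) : 0 < t ^ (p + 1) - 1 := by
  have := key_lb hp ht; linarith

lemma integrableOn_Ioc (p : ℝ) (hp : 5 ≤ p) :
    IntegrableOn (fun t => 1 / Real.sqrt (t ^ (p + 1) - 1)) (Ioc (1:ℝ) 2) := by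
  have hg : IntegrableOn (fun t : ℝ => (t - 1) ^ (-(1/2) : ℝ)) (Ioc (1:ℝ) 2) := by
    have h0 : IntervalIntegrable (fun x : ℝ => x ^ (-(1/2) : ℝ)) volume 0 1 :=
      intervalIntegral.intervalIntegrable_rpow' (by norm_num)
    have h1 := h0.comp_sub_right 1
    norm_num at h1
    exact (intervalIntegrable_iff_integrableOn_Ioc_of_le (by norm_num)).mp h1
  refine hg.integrable.mono' ?_ ?_
  · apply Measurable.aestronglyMeasurable
    fun_prop
  · rw [ae_restrict_iff' measurableSet_Ioc]
    filter_upwards with t ht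
    have ht1 : 1 < t := ht.1
    have h2 : Real.sqrt (t - 1) ≤ Real.sqrt (t ^ (p + 1) - 1) :=
      Real.sqrt_le_sqrt (key_lb hp ht1)
    have h3 : 0 < Real.sqrt (t - 1) := Real.sqrt_pos.mpr (by linarith)
    rw [Real.norm_eq_abs, abs_of_nonneg (integrand_nonneg p t)]
    calc 1 / Real.sqrt (t ^ (p + 1) - 1) ≤ 1 / Real.sqrt (t - 1) :=
          one_div_le_one_div_of_le h3 h2
      _ = (t - 1) ^ (-(1/2) : ℝ) := by
          rw [Real.rpow_neg (by linarith), Real.sqrt_eq_rpow, one_div]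

lemma integrableOn_Ioi2 (p : ℝ) (hp : 5 ≤ p) :
    IntegrableOn (fun t => 1 / Real.sqrt (t ^ (p + 1) - 1)) (Ioi (2:ℝ)) := by
  have hg : IntegrableOn (fun t : ℝ => 2 * t ^ (-2 : ℝ)) (Ioi (2:ℝ)) :=
    (integrableOn_Ioi_rpow_of_lt (by norm_num) (by norm_num)).const_mul 2
  refine hg.integrable.mono' ?_ ?_
  · apply Measurable.aestronglyMeasurable
    fun_prop
  · rw [ae_restrict_iff' measurableSet_Ioi]
    filter_upwards with t ht
    have ht2 : 2 < t := ht
    have ht1 : (1:ℝ) ≤ t := by linarith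
    have h6 : t ^ (6 : ℝ) ≤ t ^ (p + 1) :=
      Real.rpow_le_rpow_of_exponent_le ht1 (by linarith)
    have h6' : t ^ (6 : ℝ) = t ^ (6 : ℕ) := by
      rw [← Real.rpow_natCast t 6]; norm_num
    have hq : (t ^ 2 / 2) ^ 2 ≤ t ^ (p + 1) - 1 := by
      rw [h6'] at h6
      have h4 : (16:ℝ) ≤ t ^ 4 := by
        have := pow_le_pow_left₀ (by norm_num : (0:ℝ) ≤ 2) ht2.le 4
        norm_num at this; linarith
      have hsq : (4:ℝ) ≤ t ^ 2 := by nlinarith [sq_nonneg (t - 2)]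
      have h5 : 4 * t ^ 4 ≤ t ^ 2 * t ^ 4 :=
        mul_le_mul_of_nonneg_right hsq (by positivity)
      have h66 : t ^ 6 = t ^ 2 * t ^ 4 := by ring
      nlinarith
    have hpos : (0:ℝ) < t ^ 2 / 2 := by positivity
    have h7 : t ^ 2 / 2 ≤ Real.sqrt (t ^ (p + 1) - 1) := by
      have := Real.sqrt_le_sqrt hq
      rwa [Real.sqrt_sq hpos.le] at this
    rw [Real.norm_eq_abs, abs_of_nonneg (integrand_nonneg p t)]
    calc 1 / Real.sqrt (t ^ (p + 1) - 1) ≤ 1 / (t ^ 2 / 2) :=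
          one_div_le_one_div_of_le hpos h7
      _ = 2 * t ^ (-2 : ℝ) := by
          have h8 : t ^ (-2 : ℝ) = (t ^ 2)⁻¹ := by
            rw [Real.rpow_neg (by positivity), ← Real.rpow_natCast t 2]
            norm_num
          rw [h8]
          field_simp


lemma integrableOn_Ioi1 (p : ℝ) (hp : 5 ≤ p) :
    IntegrableOn (fun t => 1 / Real.sqrt (t ^ (p + 1) - 1)) (Ioi (1:ℝ)) := by
  rw [← Set.Ioc_union_Ioi_eq_Ioi (by norm_num : (1:ℝ) ≤ 2)]
  exact (integrableOn_Ioc p hp).union (integrableOn_Ioi2 p hp)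

noncomputable def myC : ℝ :=
  (∫ t in Set.Ioc (1:ℝ) 2, (t - 1) ^ (-(1/2) : ℝ)) + ∫ t in Set.Ioi (2:ℝ), 2 * t ^ (-2 : ℝ)

lemma g1_int : IntegrableOn (fun t : ℝ => (t - 1) ^ (-(1/2) : ℝ)) (Ioc (1:ℝ) 2) := by
  have h0 : IntervalIntegrable (fun x : ℝ => x ^ (-(1/2) : ℝ)) volume 0 1 :=
    intervalIntegral.intervalIntegrable_rpow' (by norm_num)
  have h1 := h0.comp_sub_right 1
  norm_num at h1
  exact (intervalIntegrable_iff_integrableOn_Ioc_of_le (by norm_num)).mp h1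

lemma g2_int : IntegrableOn (fun t : ℝ => 2 * t ^ (-2 : ℝ)) (Ioi (2:ℝ)) :=
  (integrableOn_Ioi_rpow_of_lt (by norm_num) (by norm_num)).const_mul 2

lemma bound1 {p : ℝ} (hp : 5 ≤ p) {t : ℝ} (ht : t ∈ Ioc (1:ℝ) 2) :
    1 / Real.sqrt (t ^ (p + 1) - 1) ≤ (t - 1) ^ (-(1/2) : ℝ) := by
  have ht1 : 1 < t := ht.1
  have h2 : Real.sqrt (t - 1) ≤ Real.sqrt (t ^ (p + 1) - 1) :=
    Real.sqrt_le_sqrt (key_lb hp ht1)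
  have h3 : 0 < Real.sqrt (t - 1) := Real.sqrt_pos.mpr (by linarith)
  calc 1 / Real.sqrt (t ^ (p + 1) - 1) ≤ 1 / Real.sqrt (t - 1) :=
        one_div_le_one_div_of_le h3 h2
    _ = (t - 1) ^ (-(1/2) : ℝ) := by
        rw [Real.rpow_neg (by linarith), Real.sqrt_eq_rpow, one_div]

lemma bound2 {p : ℝ} (hp : 5 ≤ p) {t : ℝ} (ht : t ∈ Ioi (2:ℝ)) :
    1 / Real.sqrt (t ^ (p + 1) - 1) ≤ 2 * t ^ (-2 : ℝ) := by
  have ht2 : 2 < t := ht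
  have ht1 : (1:ℝ) ≤ t := by linarith
  have h6 : t ^ (6 : ℝ) ≤ t ^ (p + 1) :=
    Real.rpow_le_rpow_of_exponent_le ht1 (by linarith)
  have h6' : t ^ (6 : ℝ) = t ^ (6 : ℕ) := by
    rw [← Real.rpow_natCast t 6]; norm_num
  have hq : (t ^ 2 / 2) ^ 2 ≤ t ^ (p + 1) - 1 := by
    rw [h6'] at h6
    have h4 : (16:ℝ) ≤ t ^ 4 := by
      have := pow_le_pow_left₀ (by norm_num : (0:ℝ) ≤ 2) ht2.le 4
      norm_num at this; linarith
    have hsq : (4:ℝ) ≤ t ^ 2 := by nlinarith [sq_nonneg (t - 2)]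
    have h5 : 4 * t ^ 4 ≤ t ^ 2 * t ^ 4 :=
      mul_le_mul_of_nonneg_right hsq (by positivity)
    have h66 : t ^ 6 = t ^ 2 * t ^ 4 := by ring
    nlinarith
  have hpos : (0:ℝ) < t ^ 2 / 2 := by positivity
  have h7 : t ^ 2 / 2 ≤ Real.sqrt (t ^ (p + 1) - 1) := by
    have := Real.sqrt_le_sqrt hq
    rwa [Real.sqrt_sq hpos.le] at this
  calc 1 / Real.sqrt (t ^ (p + 1) - 1) ≤ 1 / (t ^ 2 / 2) :=
        one_div_le_one_div_of_le hpos h7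
    _ = 2 * t ^ (-2 : ℝ) := by
        have h8 : t ^ (-2 : ℝ) = (t ^ 2)⁻¹ := by
          rw [Real.rpow_neg (by positivity), ← Real.rpow_natCast t 2]
          norm_num
        rw [h8]
        field_simp

lemma upper_bound (p : ℝ) (hp : 5 ≤ p) : myL p ≤ myC := by
  unfold myL myC
  rw [← Set.Ioc_union_Ioi_eq_Ioi (by norm_num : (1:ℝ) ≤ 2),
    setIntegral_union (Set.Ioc_disjoint_Ioi le_rfl) measurableSet_Ioi
      (integrableOn_Ioc p hp) (integrableOn_Ioi2 p hp)]
  refine add_le_add ?_ ?_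
  · exact setIntegral_mono_on (integrableOn_Ioc p hp) g1_int measurableSet_Ioc
      (fun t ht => bound1 hp ht)
  · exact setIntegral_mono_on (integrableOn_Ioi2 p hp) g2_int measurableSet_Ioi
      (fun t ht => bound2 hp ht)

lemma lower_bound (p : ℝ) (hp : 5 ≤ p) : (Real.sqrt 2)⁻¹ / (p + 1) ≤ myL p := by
  have hq : (0:ℝ) < p + 1 := by linarith
  set a : ℝ := 1 + 1/(p+1) with ha
  have ha1 : 1 < a := by
    have : 0 < 1/(p+1) := by positivity
    simp only [ha]; linarith
  have hsub : Ioc (1:ℝ) a ⊆ Ioi 1 := Set.Ioc_subset_Ioi_self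
  have hintf : IntegrableOn (fun t => 1 / Real.sqrt (t ^ (p + 1) - 1)) (Ioc 1 a) :=
    (integrableOn_Ioi1 p hp).mono_set hsub
  have hbd : ∀ t ∈ Ioc (1:ℝ) a, (Real.sqrt 2)⁻¹ ≤ 1 / Real.sqrt (t ^ (p + 1) - 1) := by
    intro t ht
    have ht1 : 1 < t := ht.1
    have h1 : t ^ (p+1) ≤ a ^ (p+1) :=
      Real.rpow_le_rpow (by linarith) ht.2 (by linarith)
    have h2 : a ≤ Real.exp (1/(p+1)) := by
      have := Real.add_one_le_exp (1/(p+1))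
      simp only [ha]; linarith
    have h3 : a ^ (p+1) ≤ (Real.exp (1/(p+1))) ^ ((p+1) : ℝ) :=
      Real.rpow_le_rpow (by linarith) h2 (by linarith)
    have h4 : (Real.exp (1/(p+1))) ^ ((p+1) : ℝ) = Real.exp 1 := by
      rw [← Real.exp_mul]
      congr 1
      field_simp
    have h5 : t ^ (p+1) - 1 ≤ 2 := by
      have := Real.exp_one_lt_d9
      rw [h4] at h3; linarith
    have h6 : Real.sqrt (t ^ (p+1) - 1) ≤ Real.sqrt 2 := Real.sqrt_le_sqrt h5
    have h7 : 0 < Real.sqrt (t ^ (p+1) - 1) := Real.sqrt_pos.mpr (key_pos hp ht1)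
    rw [← one_div]
    exact one_div_le_one_div_of_le h7 h6
  have step1 : ∫ _ in Ioc (1:ℝ) a, (Real.sqrt 2)⁻¹ ≤ ∫ t in Ioc (1:ℝ) a, 1 / Real.sqrt (t ^ (p + 1) - 1) :=
    setIntegral_mono_on ((integrableOn_const_iff).mpr (Or.inr (by rw [Real.volume_Ioc]; exact ENNReal.ofReal_lt_top)))
      hintf measurableSet_Ioc hbd
  have step0 : (∫ _ in Ioc (1:ℝ) a, (Real.sqrt 2)⁻¹) = (Real.sqrt 2)⁻¹ / (p + 1) := by
    rw [setIntegral_const, measureReal_def, Real.volume_Ioc, ENNReal.toReal_ofReal (by linarith), smul_eq_mul]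
    simp only [ha]
    ring
  have step2 : ∫ t in Ioc (1:ℝ) a, 1 / Real.sqrt (t ^ (p + 1) - 1) ≤ myL p := by
    unfold myL
    refine setIntegral_mono_set (integrableOn_Ioi1 p hp) ?_ (HasSubset.Subset.eventuallyLE hsub)
    filter_upwards with t using integrand_nonneg p t
  calc (Real.sqrt 2)⁻¹ / (p + 1) = ∫ _ in Ioc (1:ℝ) a, (Real.sqrt 2)⁻¹ := step0.symm
    _ ≤ ∫ t in Ioc (1:ℝ) a, 1 / Real.sqrt (t ^ (p + 1) - 1) := step1
    _ ≤ myL p := step2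

lemma myL_pos (p : ℝ) (hp : 5 ≤ p) : 0 < myL p := by
  have h1 : (0:ℝ) < (Real.sqrt 2)⁻¹ / (p + 1) := by positivity
  exact h1.trans_le (lower_bound p hp)

lemma myC_pos : 0 < myC := (myL_pos 5 le_rfl).trans_le (upper_bound 5 le_rfl)

lemma tendsto_log_div : Tendsto (fun p : ℝ => Real.log (p + 1) / (p - 1)) atTop (𝓝 0) := by
  have h := Real.tendsto_pow_log_div_mul_add_atTop 1 (-2) 1 one_ne_zero
  have h2 : Tendsto (fun p : ℝ => p + 1) atTop atTop :=
    tendsto_atTop_add_const_right _ 1 tendsto_id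
  refine (h.comp h2).congr fun p => ?_
  simp only [Function.comp_apply, pow_one]
  ring_nf

lemma tendsto_inv' : Tendsto (fun p : ℝ => 1 / (p - 1)) atTop (𝓝 0) := by
  have h2 : Tendsto (fun p : ℝ => p - 1) atTop atTop :=
    tendsto_atTop_add_const_right _ (-1) tendsto_id |>.congr fun p => by simp only [id_eq]; ring
  exact (tendsto_inv_atTop_zero.comp h2).congr fun p => (one_div _).symm

lemma F_tendsto :
    Tendsto (fun p : ℝ => 2 / (p - 1) * Real.log (Real.sqrt ((p + 1) / 2) * myL p))
      atTop (𝓝 0) := by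
  have hlo : Tendsto (fun p : ℝ =>
      -(Real.log (p+1) / (p-1)) + (-Real.log 2 - 2 * Real.log (Real.sqrt 2)) * (1 / (p-1)))
      atTop (𝓝 0) := by
    have := (tendsto_log_div.neg).add ((tendsto_inv'.const_mul (-Real.log 2 - 2 * Real.log (Real.sqrt 2))))
    simpa using this
  have hhi : Tendsto (fun p : ℝ =>
      Real.log (p+1) / (p-1) + (2 * Real.log myC - Real.log 2) * (1 / (p-1)))
      atTop (𝓝 0) := by
    have := tendsto_log_div.add ((tendsto_inv'.const_mul (2 * Real.log myC - Real.log 2)))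
    simpa using this
  refine tendsto_of_tendsto_of_tendsto_of_le_of_le' hlo hhi ?_ ?_
  · filter_upwards [eventually_ge_atTop (5:ℝ)] with p hp
    have hq : (0:ℝ) < p + 1 := by linarith
    have hp1 : (0:ℝ) < p - 1 := by linarith
    have hs : 0 < Real.sqrt ((p + 1) / 2) := Real.sqrt_pos.mpr (by positivity)
    have hlow : (0:ℝ) < Real.sqrt ((p+1)/2) * ((Real.sqrt 2)⁻¹ / (p + 1)) := by positivity
    have hmono : Real.sqrt ((p+1)/2) * ((Real.sqrt 2)⁻¹ / (p + 1)) ≤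
        Real.sqrt ((p+1)/2) * myL p :=
      mul_le_mul_of_nonneg_left (lower_bound p hp) hs.le
    have hlog := Real.log_le_log hlow hmono
    have hexp : Real.log (Real.sqrt ((p+1)/2) * ((Real.sqrt 2)⁻¹ / (p + 1))) =
        (Real.log (p+1) - Real.log 2) / 2 - Real.log (Real.sqrt 2) - Real.log (p+1) := by
      rw [Real.log_mul hs.ne' (by positivity), Real.log_sqrt (by positivity),
        Real.log_div hq.ne' (by norm_num), div_eq_mul_inv (Real.sqrt 2)⁻¹,
        Real.log_mul (by positivity) (by positivity), Real.log_inv, Real.log_inv]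
      ring
    calc -(Real.log (p+1) / (p-1)) + (-Real.log 2 - 2 * Real.log (Real.sqrt 2)) * (1 / (p-1))
        = 2 / (p-1) * ((Real.log (p+1) - Real.log 2) / 2 - Real.log (Real.sqrt 2) - Real.log (p+1)) := by
          field_simp; ring
      _ = 2 / (p-1) * Real.log (Real.sqrt ((p+1)/2) * ((Real.sqrt 2)⁻¹ / (p + 1))) := by rw [hexp]
      _ ≤ 2 / (p-1) * Real.log (Real.sqrt ((p+1)/2) * myL p) :=
          mul_le_mul_of_nonneg_left hlog (by positivity)
  · filter_upwards [eventually_ge_atTop (5:ℝ)] with p hp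
    have hq : (0:ℝ) < p + 1 := by linarith
    have hp1 : (0:ℝ) < p - 1 := by linarith
    have hs : 0 < Real.sqrt ((p + 1) / 2) := Real.sqrt_pos.mpr (by positivity)
    have hBpos : 0 < Real.sqrt ((p+1)/2) * myL p := mul_pos hs (myL_pos p hp)
    have hmono : Real.sqrt ((p+1)/2) * myL p ≤ Real.sqrt ((p+1)/2) * myC :=
      mul_le_mul_of_nonneg_left (upper_bound p hp) hs.le
    have hlog := Real.log_le_log hBpos hmono
    have hexp : Real.log (Real.sqrt ((p+1)/2) * myC) =
        (Real.log (p+1) - Real.log 2) / 2 + Real.log myC := by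
      rw [Real.log_mul hs.ne' myC_pos.ne', Real.log_sqrt (by positivity),
        Real.log_div hq.ne' (by norm_num)]
    calc 2 / (p-1) * Real.log (Real.sqrt ((p+1)/2) * myL p)
        ≤ 2 / (p-1) * Real.log (Real.sqrt ((p+1)/2) * myC) :=
          mul_le_mul_of_nonneg_left hlog (by positivity)
      _ = Real.log (p+1) / (p-1) + (2 * Real.log myC - Real.log 2) * (1 / (p-1)) := by
          rw [hexp]; field_simp; ring

theorem mu_p_tendsto_one :
    Tendsto (fun p : ℝ =>
        Real.log ((Real.sqrt ((p + 1) / 2) *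
          ∫ t in Set.Ioi (1 : ℝ), 1 / Real.sqrt (t ^ (p + 1) - 1)) ^ (2 / (p - 1))))
      atTop (𝓝 0) ∧
    Tendsto (fun p : ℝ =>
        (Real.sqrt ((p + 1) / 2) *
          ∫ t in Set.Ioi (1 : ℝ), 1 / Real.sqrt (t ^ (p + 1) - 1)) ^ (2 / (p - 1)))
      atTop (𝓝 1) := by
  have hF := F_tendsto
  have hlog : Tendsto (fun p : ℝ =>
      Real.log ((Real.sqrt ((p + 1) / 2) * myL p) ^ (2 / (p - 1)))) atTop (𝓝 0) := by
    refine hF.congr' ?_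
    filter_upwards [eventually_ge_atTop (5:ℝ)] with p hp
    have hs : 0 < Real.sqrt ((p + 1) / 2) := Real.sqrt_pos.mpr (by positivity)
    have hBpos : 0 < Real.sqrt ((p+1)/2) * myL p := mul_pos hs (myL_pos p hp)
    rw [Real.log_rpow hBpos]
  have hexp : Tendsto (fun p : ℝ =>
      (Real.sqrt ((p + 1) / 2) * myL p) ^ (2 / (p - 1))) atTop (𝓝 1) := by
    have h1 : Tendsto (fun p : ℝ => Real.exp (2 / (p - 1) *
        Real.log (Real.sqrt ((p + 1) / 2) * myL p))) atTop (𝓝 1) := by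
      have := (Real.continuous_exp.tendsto 0).comp hF
      simpa [Function.comp_def] using this
    refine h1.congr' ?_
    filter_upwards [eventually_ge_atTop (5:ℝ)] with p hp
    have hs : 0 < Real.sqrt ((p + 1) / 2) := Real.sqrt_pos.mpr (by positivity)
    have hBpos : 0 < Real.sqrt ((p+1)/2) * myL p := mul_pos hs (myL_pos p hp)
    rw [Real.rpow_def_of_pos hBpos, mul_comm]
  exact ⟨hlog, hexp⟩
end

section
/- Let p > 1, 0 < q < (p-1)/2, and let U be as in the time-map setting with minimum μ. Then ∫_{-1}^{1} U(x)^q dx = √(2/(p+1)) · μ^{(2q-p+1)/2} · B((p-2q-1)/(2(p+1)), 1/2). -/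
open Real Set MeasureTheory Filter Topology

lemma key_calc (p q μ u w : ℝ) (hp : 1 < p) (hμ : 0 < μ) (hu : μ < u) (hw : 0 < w)
    (hw2 : w ^ 2 = 2 / (p + 1) * (u ^ (p + 1) - μ ^ (p + 1))) :
    (p + 1) * (μ / u) ^ (p + 1 - 1) * (μ * w / u ^ 2) *
      (((μ / u) ^ (p + 1)) ^ ((p - 2 * q - 1) / (2 * (p + 1)) - 1) *
        (1 - (μ / u) ^ (p + 1)) ^ ((1 : ℝ) / 2 - 1)) =
      Real.sqrt (2 * (p + 1)) * μ ^ ((p - 2 * q - 1) / 2) * u ^ q := by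
  have hp1 : (0:ℝ) < p + 1 := by linarith
  have hu0 : 0 < u := hμ.trans hu
  have hA : 0 < μ / u := div_pos hμ hu0
  have hup : 0 < u ^ (p + 1) := Real.rpow_pos_of_pos hu0 _
  have hrw : 1 - (μ / u) ^ (p + 1) = ((p + 1) / 2 * w ^ 2) / u ^ (p + 1) := by
    rw [Real.div_rpow hμ.le hu0.le, hw2]
    field_simp
  rw [hrw, ← Real.rpow_mul hA.le]
  have hB : 0 < ((p + 1) / 2 * w ^ 2) / u ^ (p + 1) := by positivity
  have hL : 0 < (p + 1) * (μ / u) ^ (p + 1 - 1) * (μ * w / u ^ 2) *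
      ((μ / u) ^ ((p + 1) * ((p - 2 * q - 1) / (2 * (p + 1)) - 1)) *
        (((p + 1) / 2 * w ^ 2) / u ^ (p + 1)) ^ ((1 : ℝ) / 2 - 1)) := by positivity
  have hR : 0 < Real.sqrt (2 * (p + 1)) * μ ^ ((p - 2 * q - 1) / 2) * u ^ q := by positivity
  apply Real.log_injOn_pos (Set.mem_Ioi.2 hL) (Set.mem_Ioi.2 hR)
  rw [Real.log_mul (by positivity) (by positivity), Real.log_mul (by positivity) (by positivity),
    Real.log_mul (by positivity) (by positivity), Real.log_mul (by positivity) (by positivity),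
    Real.log_rpow hA, Real.log_rpow hA, Real.log_rpow hB,
    Real.log_div hμ.ne' hu0.ne',
    Real.log_div (by positivity) (by positivity), Real.log_mul hμ.ne' hw.ne', Real.log_pow,
    Real.log_div (by positivity) (by positivity), Real.log_mul (by positivity) (by positivity),
    Real.log_div (by positivity) (by positivity), Real.log_pow, Real.log_rpow hu0,
    Real.log_mul (by positivity) (by positivity), Real.log_mul (by positivity) (by positivity),
    Real.log_sqrt (by positivity), Real.log_mul two_ne_zero (by positivity),
    Real.log_rpow hμ, Real.log_rpow hu0]
  field_simp
  ring

theorem Lq_norm_formula (p q : ℝ) (hp : 1 < p) (hq0 : 0 < q) (hq : q < (p - 1) / 2)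
    (U U' U'' : ℝ → ℝ) (μ : ℝ) (hμ : 0 < μ)
    (hU1 : ∀ x ∈ Set.Ioo (-1 : ℝ) 1, HasDerivAt U (U' x) x)
    (hU2 : ∀ x ∈ Set.Ioo (-1 : ℝ) 1, HasDerivAt U' (U'' x) x)
    (heven : ∀ x, U (-x) = U x)
    (hpos : ∀ x ∈ Set.Ioo (-1 : ℝ) 1, 0 < U x)
    (heq : ∀ x ∈ Set.Ioo (-1 : ℝ) 1, U'' x = U x ^ p)
    (hblow1 : Tendsto U (𝓝[Set.Ioo (-1 : ℝ) 1] (-1)) atTop)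
    (hblow2 : Tendsto U (𝓝[Set.Ioo (-1 : ℝ) 1] 1) atTop)
    (hmin : ∀ x ∈ Set.Ioo (-1 : ℝ) 1, μ ≤ U x) (hU0 : U 0 = μ)
    (hU' : ∀ x ∈ Set.Ico (0 : ℝ) 1,
      U' x = Real.sqrt ((2 / (p + 1)) * (U x ^ (p + 1) - μ ^ (p + 1)))) :
    (∫ x in Set.Ioo (-1 : ℝ) 1, U x ^ q) =
      Real.sqrt (2 / (p + 1)) * μ ^ ((2 * q - p + 1) / 2) *
        ∫ s in Set.Ioo (0 : ℝ) 1,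
          s ^ ((p - 2 * q - 1) / (2 * (p + 1)) - 1) * (1 - s) ^ ((1 : ℝ) / 2 - 1) := by
  have hp1 : (0:ℝ) < p + 1 := by linarith
  have hsub : Set.Ioo (0:ℝ) 1 ⊆ Set.Ioo (-1:ℝ) 1 := fun x hx => ⟨by linarith [hx.1], hx.2⟩
  have hsub' : Set.Ico (0:ℝ) 1 ⊆ Set.Ioo (-1:ℝ) 1 := fun x hx => ⟨by linarith [hx.1], hx.2⟩
  have h0mem : (0:ℝ) ∈ Set.Ioo (-1:ℝ) 1 := by norm_num
  -- U'(0) = 0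
  have hU'0 : U' 0 = 0 := by
    have := hU' 0 ⟨le_refl 0, one_pos⟩
    rw [hU0] at this
    simpa using this
  -- U' is positive on (0,1)
  have hU'mono : StrictMonoOn U' (Set.Ico (0:ℝ) 1) := by
    apply strictMonoOn_of_deriv_pos (convex_Ico 0 1)
      (fun x hx => ((hU2 x (hsub' hx)).continuousAt).continuousWithinAt)
    intro x hx
    rw [interior_Ico] at hx
    rw [(hU2 x (hsub hx)).deriv, heq x (hsub hx)]
    exact Real.rpow_pos_of_pos (hpos x (hsub hx)) p
  have hU'pos : ∀ x ∈ Set.Ioo (0:ℝ) 1, 0 < U' x := by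
    intro x hx
    have := hU'mono ⟨le_refl 0, one_pos⟩ ⟨hx.1.le, hx.2⟩ hx.1
    rwa [hU'0] at this
  -- U is strictly increasing on [0,1), so μ < U x on (0,1)
  have hUmono : StrictMonoOn U (Set.Ico (0:ℝ) 1) := by
    apply strictMonoOn_of_deriv_pos (convex_Ico 0 1)
      (fun x hx => ((hU1 x (hsub' hx)).continuousAt).continuousWithinAt)
    intro x hx
    rw [interior_Ico] at hx
    rw [(hU1 x (hsub hx)).deriv]
    exact hU'pos x hx
  have hμU : ∀ x ∈ Set.Ioo (0:ℝ) 1, μ < U x := by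
    intro x hx
    have := hUmono ⟨le_refl 0, one_pos⟩ ⟨hx.1.le, hx.2⟩ hx.1
    rwa [hU0] at this
  have hw2 : ∀ x ∈ Set.Ioo (0:ℝ) 1, (U' x) ^ 2 = 2 / (p + 1) * (U x ^ (p + 1) - μ ^ (p + 1)) := by
    intro x hx
    rw [hU' x ⟨hx.1.le, hx.2⟩]
    apply Real.sq_sqrt
    have : μ ^ (p+1) ≤ U x ^ (p+1) := Real.rpow_le_rpow hμ.le (hμU x hx).le (by linarith)
    have h2 : (0:ℝ) ≤ 2 / (p+1) := by positivity
    nlinarith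
  -- the substitution map
  set σ : ℝ → ℝ := fun x => (μ / U x) ^ (p + 1) with hσdef
  set σ' : ℝ → ℝ := fun x =>
    (0 * U x - μ * U' x) / U x ^ 2 * (p + 1) * (μ / U x) ^ (p + 1 - 1) with hσ'def
  have hσd : ∀ x ∈ Set.Ioo (0:ℝ) 1, HasDerivAt σ (σ' x) x := by
    intro x hx
    simp only [hσdef, hσ'def]
    exact HasDerivAt.rpow_const
      ((hasDerivAt_const x μ).div (hU1 x (hsub hx)) (hpos x (hsub hx)).ne')
      (Or.inl (div_pos hμ (hpos x (hsub hx))).ne')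
  have hσ'neg : ∀ x ∈ Set.Ioo (0:ℝ) 1, σ' x < 0 := by
    intro x hx
    have h1 : 0 < U x := hpos x (hsub hx)
    have h3 : 0 < U' x := hU'pos x hx
    have hposval : 0 < (p + 1) * (μ / U x) ^ (p + 1 - 1) * (μ * U' x / U x ^ 2) := by positivity
    have : σ' x = -((p + 1) * (μ / U x) ^ (p + 1 - 1) * (μ * U' x / U x ^ 2)) := by
      simp only [hσ'def]; ring
    rw [this]
    linarith
  have hanti : StrictAntiOn σ (Set.Ioo (0:ℝ) 1) := by
    apply strictAntiOn_of_deriv_neg (convex_Ioo 0 1)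
      (fun x hx => ((hσd x hx).continuousAt).continuousWithinAt)
    intro x hx
    rw [interior_Ioo] at hx
    rw [(hσd x hx).deriv]
    exact hσ'neg x hx
  have hσmem : ∀ x ∈ Set.Ioo (0:ℝ) 1, σ x ∈ Set.Ioo (0:ℝ) 1 := by
    intro x hx
    have h1 : 0 < U x := hpos x (hsub hx)
    constructor
    · exact Real.rpow_pos_of_pos (div_pos hμ h1) _
    · exact Real.rpow_lt_one (div_pos hμ h1).le ((div_lt_one h1).mpr (hμU x hx)) (by linarith)
  -- the image of (0,1) under σ is (0,1)
  have himg : σ '' Set.Ioo (0:ℝ) 1 = Set.Ioo (0:ℝ) 1 := by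
    apply Set.Subset.antisymm
    · rintro y ⟨x, hx, rfl⟩; exact hσmem x hx
    · intro y hy
      have ht1 : Tendsto σ (𝓝[Set.Ioo (0:ℝ) 1] 0) (𝓝 1) := by
        have h1 : ContinuousAt (fun x => μ / U x) 0 :=
          continuousAt_const.div (hU1 0 h0mem).continuousAt (by rw [hU0]; exact hμ.ne')
        have hc : ContinuousAt σ 0 := h1.rpow_const (Or.inr (by linarith))
        have hval : σ 0 = 1 := by
          simp only [hσdef, hU0, div_self hμ.ne', Real.one_rpow]
        have := hc.continuousWithinAt (s := Set.Ioo (0:ℝ) 1)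
        rwa [ContinuousWithinAt, hval] at this
      have ht0 : Tendsto σ (𝓝[Set.Ioo (0:ℝ) 1] 1) (𝓝 0) := by
        have hU : Tendsto U (𝓝[Set.Ioo (0:ℝ) 1] 1) atTop :=
          hblow2.mono_left (nhdsWithin_mono _ hsub)
        have hdiv : Tendsto (fun x => μ / U x) (𝓝[Set.Ioo (0:ℝ) 1] 1) (𝓝 0) :=
          Tendsto.div_atTop tendsto_const_nhds hU
        have hrpow : ContinuousAt (fun t : ℝ => t ^ (p + 1)) 0 :=
          Real.continuousAt_rpow_const 0 (p + 1) (Or.inr (by linarith))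
        have := hrpow.tendsto.comp hdiv
        simpa [hσdef, Real.zero_rpow (by positivity : (0:ℝ) < p + 1).ne',
          Function.comp_def] using this
      haveI hne0 : (𝓝[Set.Ioo (0:ℝ) 1] (0:ℝ)).NeBot := by
        apply mem_closure_iff_nhdsWithin_neBot.mp
        rw [closure_Ioo (by norm_num : (0:ℝ) ≠ 1)]
        exact ⟨le_refl 0, by norm_num⟩
      haveI hne1 : (𝓝[Set.Ioo (0:ℝ) 1] (1:ℝ)).NeBot := by
        apply mem_closure_iff_nhdsWithin_neBot.mp
        rw [closure_Ioo (by norm_num : (0:ℝ) ≠ 1)]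
        exact ⟨by norm_num, le_refl 1⟩
      obtain ⟨x₁, hx₁, hx₁mem⟩ :=
        ((ht1.eventually (eventually_gt_nhds hy.2)).and eventually_mem_nhdsWithin).exists
      obtain ⟨x₂, hx₂, hx₂mem⟩ :=
        ((ht0.eventually (eventually_lt_nhds hy.1)).and eventually_mem_nhdsWithin).exists
      have hx12 : x₁ < x₂ := by
        rcases lt_trichotomy x₁ x₂ with h | rfl | h
        · exact h
        · linarith
        · have := hanti hx₂mem hx₁mem h
          linarith
      have hIcc : Set.Icc x₁ x₂ ⊆ Set.Ioo (0:ℝ) 1 :=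
        fun z hz => ⟨lt_of_lt_of_le hx₁mem.1 hz.1, lt_of_le_of_lt hz.2 hx₂mem.2⟩
      have hcont : ContinuousOn σ (Set.Icc x₁ x₂) :=
        fun z hz => ((hσd z (hIcc hz)).continuousAt).continuousWithinAt
      obtain ⟨z, hz, hzy⟩ := intermediate_value_Icc' hx12.le hcont ⟨hx₂.le, hx₁.le⟩
      exact ⟨z, hIcc hz, hzy⟩
  have hinj : Set.InjOn σ (Set.Ioo (0:ℝ) 1) := hanti.injOn
  set g : ℝ → ℝ := fun s =>
    s ^ ((p - 2 * q - 1) / (2 * (p + 1)) - 1) * (1 - s) ^ ((1 : ℝ) / 2 - 1) with hgdef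
  set c : ℝ := Real.sqrt (2 * (p + 1)) * μ ^ ((p - 2 * q - 1) / 2) with hcdef
  have hcov : ∫ s in Set.Ioo (0:ℝ) 1, g s = ∫ x in Set.Ioo (0:ℝ) 1, |σ' x| • g (σ x) := by
    conv_lhs => rw [← himg]
    exact integral_image_eq_integral_abs_deriv_smul measurableSet_Ioo
      (fun x hx => (hσd x hx).hasDerivWithinAt) hinj g
  have hpt : ∀ x ∈ Set.Ioo (0:ℝ) 1, |σ' x| • g (σ x) = c * U x ^ q := by
    intro x hx
    have h1 : 0 < U x := hpos x (hsub hx)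
    have h2 : μ < U x := hμU x hx
    have h3 : 0 < U' x := hU'pos x hx
    have habs : |σ' x| = (p + 1) * (μ / U x) ^ (p + 1 - 1) * (μ * U' x / U x ^ 2) := by
      have hval : σ' x = -((p + 1) * (μ / U x) ^ (p + 1 - 1) * (μ * U' x / U x ^ 2)) := by
        simp only [hσ'def]; ring
      rw [hval, abs_neg, abs_of_pos (by positivity)]
    rw [smul_eq_mul, habs, hgdef, hσdef, hcdef]
    exact key_calc p q μ (U x) (U' x) hp hμ h2 h3 (hw2 x hx)
  have hbeta : ∫ s in Set.Ioo (0:ℝ) 1, g s = c * ∫ x in Set.Ioo (0:ℝ) 1, U x ^ q := by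
    rw [hcov, setIntegral_congr_fun measurableSet_Ioo hpt, MeasureTheory.integral_const_mul]
  have hconst : Real.sqrt (2 / (p + 1)) * μ ^ ((2 * q - p + 1) / 2) * c = 2 := by
    have h1 : Real.sqrt (2 / (p + 1)) * Real.sqrt (2 * (p + 1)) = 2 := by
      rw [← Real.sqrt_mul (by positivity)]
      rw [show 2 / (p + 1) * (2 * (p + 1)) = 4 by field_simp; ring]
      rw [show (4:ℝ) = 2 ^ 2 by norm_num, Real.sqrt_sq (by norm_num)]
    have h2 : μ ^ ((2 * q - p + 1) / 2) * μ ^ ((p - 2 * q - 1) / 2) = 1 := by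
      rw [← Real.rpow_add hμ, show (2 * q - p + 1) / 2 + (p - 2 * q - 1) / 2 = 0 by ring,
        Real.rpow_zero]
    calc Real.sqrt (2 / (p + 1)) * μ ^ ((2 * q - p + 1) / 2) * c
        = (Real.sqrt (2 / (p + 1)) * Real.sqrt (2 * (p + 1))) *
            (μ ^ ((2 * q - p + 1) / 2) * μ ^ ((p - 2 * q - 1) / 2)) := by rw [hcdef]; ring
      _ = 2 := by rw [h1, h2]; ring
  show (∫ x in Set.Ioo (-1 : ℝ) 1, U x ^ q) =
      Real.sqrt (2 / (p + 1)) * μ ^ ((2 * q - p + 1) / 2) * ∫ s in Set.Ioo (0:ℝ) 1, g s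
  by_cases hInt : IntegrableOn (fun x => U x ^ q) (Set.Ioo (0:ℝ) 1) volume
  · -- reflection
    have hneg_img : (fun x : ℝ => -x) '' Set.Ioo (0:ℝ) 1 = Set.Ioo (-1:ℝ) 0 := by
      ext x
      simp only [Set.mem_image, Set.mem_Ioo]
      constructor
      · rintro ⟨y, hy, rfl⟩; constructor <;> linarith [hy.1, hy.2]
      · rintro ⟨h1, h2⟩; exact ⟨-x, ⟨by linarith, by linarith⟩, by ring⟩
    have hd : ∀ x ∈ Set.Ioo (0:ℝ) 1,
        HasDerivWithinAt (fun x : ℝ => -x) ((fun _ : ℝ => (-1:ℝ)) x) (Set.Ioo (0:ℝ) 1) x :=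
      fun x _ => (hasDerivAt_neg x).hasDerivWithinAt
    have hinjneg : Set.InjOn (fun x : ℝ => -x) (Set.Ioo (0:ℝ) 1) :=
      fun a _ b _ h => neg_injective h
    have hrefl : ∫ x in Set.Ioo (-1:ℝ) 0, U x ^ q = ∫ x in Set.Ioo (0:ℝ) 1, U x ^ q := by
      rw [← hneg_img,
        integral_image_eq_integral_abs_deriv_smul measurableSet_Ioo hd hinjneg]
      simp [heven]
    have hreflInt : IntegrableOn (fun x => U x ^ q) (Set.Ioo (-1:ℝ) 0) volume := by
      rw [← hneg_img,
        integrableOn_image_iff_integrableOn_abs_deriv_smul measurableSet_Ioo hd hinjneg]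
      simpa [heven] using hInt
    have hsplit : ∫ x in Set.Ioo (-1:ℝ) 1, U x ^ q =
        (∫ x in Set.Ioo (-1:ℝ) 0, U x ^ q) + ∫ x in Set.Ioo (0:ℝ) 1, U x ^ q := by
      rw [← Set.Ioc_union_Ioo_eq_Ioo (by norm_num : (-1:ℝ) ≤ 0) (by norm_num : (0:ℝ) < 1)]
      rw [setIntegral_union (Set.disjoint_left.mpr fun a ha hb => absurd ha.2 (not_le.mpr hb.1))
        measurableSet_Ioo ((integrableOn_Ioc_iff_integrableOn_Ioo enorm_ne_top).mpr hreflInt) hInt]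
      rw [integral_Ioc_eq_integral_Ioo]
    rw [hsplit, hrefl, hbeta]
    calc (∫ x in Set.Ioo (0:ℝ) 1, U x ^ q) + ∫ x in Set.Ioo (0:ℝ) 1, U x ^ q
        = 2 * ∫ x in Set.Ioo (0:ℝ) 1, U x ^ q := by ring
      _ = Real.sqrt (2 / (p + 1)) * μ ^ ((2 * q - p + 1) / 2) *
            (c * ∫ x in Set.Ioo (0:ℝ) 1, U x ^ q) := by
          rw [show Real.sqrt (2 / (p + 1)) * μ ^ ((2 * q - p + 1) / 2) *
              (c * ∫ x in Set.Ioo (0:ℝ) 1, U x ^ q) =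
              (Real.sqrt (2 / (p + 1)) * μ ^ ((2 * q - p + 1) / 2) * c) *
              ∫ x in Set.Ioo (0:ℝ) 1, U x ^ q from by ring, hconst]
  · have hnint2 : ¬ IntegrableOn (fun x => U x ^ q) (Set.Ioo (-1:ℝ) 1) volume :=
      fun h => hInt (h.mono_set hsub)
    rw [integral_undef hnint2, hbeta, integral_undef hInt, mul_zero, mul_zero]
end

section
/- Let p > 1, q > 0, M : [0,∞) → (0,∞) continuous, λ > 0, and let U_p be the unique positive C² ∩ L^q solution of U'' = U^p on (-1,1) blowing up at ±1. If u ∈ C²((-1,1)) ∩ L^q((-1,1)) is a positive solution of M(‖u‖_{L^q}) u'' = λ u^p blowing up at ±1, then u(x) = t · U_p(x)/‖U_p‖_{L^q} where t = ‖u‖_{L^q} satisfies M(t)/t^{p-1} = λ ‖U_p‖_{L^q}^{1-p}. -/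
open Real Set MeasureTheory Filter Topology

theorem nonlocal_solution_form (p q lam : ℝ) (hp : 1 < p) (hq : 0 < q) (hlam : 0 < lam)
    (M : ℝ → ℝ) (hM : Continuous M) (hMpos : ∀ s, 0 ≤ s → 0 < M s)
    (U U' U'' u u' u'' : ℝ → ℝ)
    (hU1 : ∀ x ∈ Set.Ioo (-1 : ℝ) 1, HasDerivAt U (U' x) x)
    (hU2 : ∀ x ∈ Set.Ioo (-1 : ℝ) 1, HasDerivAt U' (U'' x) x)
    (hUpos : ∀ x ∈ Set.Ioo (-1 : ℝ) 1, 0 < U x)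
    (hUeq : ∀ x ∈ Set.Ioo (-1 : ℝ) 1, U'' x = U x ^ p)
    (hUblow1 : Tendsto U (𝓝[Set.Ioo (-1 : ℝ) 1] (-1)) atTop)
    (hUblow2 : Tendsto U (𝓝[Set.Ioo (-1 : ℝ) 1] 1) atTop)
    (hULq : IntegrableOn (fun x => U x ^ q) (Set.Ioo (-1 : ℝ) 1))
    (huniq : ∀ V V' V'' : ℝ → ℝ,
      (∀ x ∈ Set.Ioo (-1 : ℝ) 1, HasDerivAt V (V' x) x) →
      (∀ x ∈ Set.Ioo (-1 : ℝ) 1, HasDerivAt V' (V'' x) x) →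
      (∀ x ∈ Set.Ioo (-1 : ℝ) 1, 0 < V x) →
      (∀ x ∈ Set.Ioo (-1 : ℝ) 1, V'' x = V x ^ p) →
      Tendsto V (𝓝[Set.Ioo (-1 : ℝ) 1] (-1)) atTop →
      Tendsto V (𝓝[Set.Ioo (-1 : ℝ) 1] 1) atTop →
      ∀ x ∈ Set.Ioo (-1 : ℝ) 1, V x = U x)
    (hu1 : ∀ x ∈ Set.Ioo (-1 : ℝ) 1, HasDerivAt u (u' x) x)
    (hu2 : ∀ x ∈ Set.Ioo (-1 : ℝ) 1, HasDerivAt u' (u'' x) x)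
    (hupos : ∀ x ∈ Set.Ioo (-1 : ℝ) 1, 0 < u x)
    (huLq : IntegrableOn (fun x => u x ^ q) (Set.Ioo (-1 : ℝ) 1))
    (hueq : ∀ x ∈ Set.Ioo (-1 : ℝ) 1,
      M ((∫ y in Set.Ioo (-1 : ℝ) 1, u y ^ q) ^ (1 / q)) * u'' x = lam * u x ^ p)
    (hublow1 : Tendsto u (𝓝[Set.Ioo (-1 : ℝ) 1] (-1)) atTop)
    (hublow2 : Tendsto u (𝓝[Set.Ioo (-1 : ℝ) 1] 1) atTop) :
    (∀ x ∈ Set.Ioo (-1 : ℝ) 1,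
      u x = ((∫ y in Set.Ioo (-1 : ℝ) 1, u y ^ q) ^ (1 / q)) * U x /
        ((∫ y in Set.Ioo (-1 : ℝ) 1, U y ^ q) ^ (1 / q))) ∧
    M ((∫ y in Set.Ioo (-1 : ℝ) 1, u y ^ q) ^ (1 / q)) /
        ((∫ y in Set.Ioo (-1 : ℝ) 1, u y ^ q) ^ (1 / q)) ^ (p - 1) =
      lam * ((∫ y in Set.Ioo (-1 : ℝ) 1, U y ^ q) ^ (1 / q)) ^ (1 - p) := by

  have hp1 : p - 1 ≠ 0 := sub_ne_zero.mpr hp.ne'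
  set It := ∫ y in Set.Ioo (-1 : ℝ) 1, u y ^ q with hIt
  have hItpos : 0 < It := by
    rw [hIt, MeasureTheory.setIntegral_pos_iff_support_of_nonneg_ae _ huLq]
    · refine lt_of_lt_of_le (b := volume (Set.Ioo (-1:ℝ) 1)) ?_ (measure_mono ?_)
      · rw [Real.volume_Ioo]
        norm_num
      · intro x hx
        refine ⟨?_, hx⟩
        simp only [Function.mem_support]
        exact (Real.rpow_pos_of_pos (hupos x hx) q).ne'
    · filter_upwards [ae_restrict_mem measurableSet_Ioo] with x hx
      exact (Real.rpow_pos_of_pos (hupos x hx) q).le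
  set t := It ^ (1 / q) with htdef
  have ht : 0 < t := Real.rpow_pos_of_pos hItpos _
  set m := M t with hmdef
  have hm : 0 < m := hMpos t ht.le
  set γ := (lam / m) ^ (1 / (p - 1)) with hγdef
  have hγ : 0 < γ := Real.rpow_pos_of_pos (div_pos hlam hm) _
  have hγp : γ ^ (p - 1) = lam / m := by
    rw [hγdef, ← Real.rpow_mul (div_nonneg hlam.le hm.le), one_div,
      inv_mul_cancel₀ hp1, Real.rpow_one]
  have hγpp : γ ^ p = γ * (lam / m) := by
    rw [show p = 1 + (p - 1) by ring, Real.rpow_add hγ, Real.rpow_one, hγp]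
  have hUu : ∀ x ∈ Set.Ioo (-1 : ℝ) 1, γ * u x = U x := by
    refine huniq (fun x => γ * u x) (fun x => γ * u' x) (fun x => γ * u'' x)
      (fun x hx => (hu1 x hx).const_mul γ) (fun x hx => (hu2 x hx).const_mul γ)
      (fun x hx => mul_pos hγ (hupos x hx)) ?_
      (hublow1.const_mul_atTop hγ) (hublow2.const_mul_atTop hγ)
    intro x hx
    have h := hueq x hx
    have hu'' : u'' x = lam * u x ^ p / m := by
      field_simp at h ⊢
      linarith
    show γ * u'' x = (γ * u x) ^ p
    rw [Real.mul_rpow hγ.le (hupos x hx).le, hu'', hγpp]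
    field_simp
  have hInt : (∫ y in Set.Ioo (-1 : ℝ) 1, U y ^ q) = γ ^ q * It := by
    rw [hIt, ← MeasureTheory.integral_const_mul]
    refine MeasureTheory.setIntegral_congr_fun measurableSet_Ioo (fun x hx => ?_)
    rw [← hUu x hx, Real.mul_rpow hγ.le (hupos x hx).le]
  have hS : (∫ y in Set.Ioo (-1 : ℝ) 1, U y ^ q) ^ (1 / q) = γ * t := by
    rw [hInt, Real.mul_rpow (Real.rpow_nonneg hγ.le q) hItpos.le,
      ← Real.rpow_mul hγ.le, mul_one_div, div_self hq.ne', Real.rpow_one, htdef]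
  constructor
  · intro x hx
    rw [hS, ← hUu x hx]
    field_simp
  · rw [hS]
    have htp : (0:ℝ) < t ^ (p - 1) := Real.rpow_pos_of_pos ht _
    have h1 : (γ * t) ^ (1 - p) = (lam / m)⁻¹ * (t ^ (p - 1))⁻¹ := by
      rw [Real.mul_rpow hγ.le ht.le, show (1:ℝ) - p = -(p - 1) by ring,
        Real.rpow_neg hγ.le, Real.rpow_neg ht.le, hγp]
    rw [h1]
    field_simp
end
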